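/- The permutation w = (s_{i+k} s_{i+k+1} ⋯ s_{i+2k})(s_{i+k−1} ⋯ s_{i+2(k−1)}) ⋯ (s_{i+1} s_{i+2}) s_i ∈ S_{n+1} is triangular, for any 1 ≤ i, k with i + 2k ≤ n. -/

import Mathlib

def IsTriangularPerm (n : ℕ) (w : Equiv.Perm ℕ) : Prop :=
  ∀ i k j l : ℕ, 1 ≤ i → i < k → k ≤ j → j < l → l ≤ n + 1 →
    w j < w i → w l < w k → w l < w i ∧ w j ≤ w k

/-- The ascending block `s_a s_{a+1} ⋯ s_b` of simple transpositions `s_t = (t, t+1)`. -/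
def blockAsc (a b : ℕ) : Equiv.Perm ℕ :=
  ((List.range' a (b + 1 - a)).map fun t => Equiv.swap t (t + 1)).prod

lemma blockAsc_apply (m : ℕ) : ∀ a x : ℕ,
    blockAsc a (a + m) x =
      if a ≤ x ∧ x ≤ a + m then x + 1 else if x = a + m + 1 then a else x := by
  induction m with
  | zero =>
    intro a x
    have h1 : a + 0 + 1 - a = 1 := by omega
    simp only [blockAsc, h1, List.range'_one, List.map_cons, List.map_nil, List.prod_cons,
      List.prod_nil, mul_one]
    rw [Equiv.swap_apply_def]
    split_ifs <;> omega
  | succ m ih =>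
    intro a x
    have h1 : a + (m + 1) + 1 - a = m + 2 := by omega
    have h2 : List.range' a (m + 2) = a :: List.range' (a + 1) (m + 1) := by
      rw [List.range'_succ]
    have h4 : (a + 1) + m + 1 - (a + 1) = m + 1 := by omega
    have h3 : blockAsc a (a + (m + 1)) =
        Equiv.swap a (a + 1) * blockAsc (a + 1) ((a + 1) + m) := by
      simp only [blockAsc, h1, h4, h2, List.map_cons, List.prod_cons]
    rw [h3, Equiv.Perm.mul_apply, ih (a + 1) x, Equiv.swap_apply_def]
    split_ifs <;> omega

/-- Explicit formula for the permutation in the theorem. -/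
def wFun (i k x : ℕ) : ℕ :=
  if x < i ∨ i + 2 * k + 1 < x then x
  else if (x - i) % 2 = 0 then i + k + 1 + (x - i) / 2 else i + (x - i) / 2

lemma wProd_apply (i : ℕ) : ∀ (k x : ℕ),
    (((List.range (k + 1)).map fun r =>
        blockAsc (i + (k - r)) (i + 2 * (k - r))).prod) x = wFun i k x := by
  intro k
  induction k with
  | zero =>
    intro x
    have h0 : ((List.range 1).map fun r =>
        blockAsc (i + (0 - r)) (i + 2 * (0 - r))).prod = blockAsc i (i + 0) := by
      simp [List.range_succ]
    rw [h0, blockAsc_apply 0 i x]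
    unfold wFun
    split_ifs <;> omega
  | succ k ih =>
    intro x
    rw [List.range_succ_eq_map, List.map_cons, List.prod_cons, List.map_map]
    have hfun : ((fun r => blockAsc (i + (k + 1 - r)) (i + 2 * (k + 1 - r))) ∘ Nat.succ)
        = fun r => blockAsc (i + (k - r)) (i + 2 * (k - r)) := by
      funext r
      simp only [Function.comp_apply, Nat.succ_sub_succ]
    rw [hfun, Equiv.Perm.mul_apply, ih x]
    have hhead : blockAsc (i + (k + 1 - 0)) (i + 2 * (k + 1 - 0))
        = blockAsc (i + k + 1) ((i + k + 1) + (k + 1)) := by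
      congr 1 <;> omega
    rw [hhead, blockAsc_apply (k + 1) (i + k + 1) (wFun i k x)]
    unfold wFun
    split_ifs <;> omega

theorem stmt15 (n i k : ℕ) (hi : 1 ≤ i) (hk : 1 ≤ k) (hn : i + 2 * k ≤ n) :
    IsTriangularPerm n
      (((List.range (k + 1)).map fun r =>
        blockAsc (i + (k - r)) (i + 2 * (k - r))).prod) := by
  intro a b c d ha hab hbc hcd hd h1 h2
  simp only [wProd_apply] at h1 h2 ⊢
  unfold wFun at h1 h2 ⊢
  split_ifs at h1 h2 ⊢ <;> omega
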